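/- For every integer t ≥ 1 and every γ > 0, there is δ > 0 such that the following holds: if G is an n-vertex graph, with n sufficiently large, with average degree at least n^{1−δ} and with no clique of size at least n^δ, then G contains at least n^{2t−γ} induced copies of K_{t,t}, i.e., at least n^{2t−γ} pairs (A,B) of disjoint t-element vertex sets such that A and B are independent sets and every vertex of A is adjacent to every vertex of B. -/

import Mathlib

open Finset Filter

namespace Stmt14Proof

variable {V : Type*} [Fintype V] [DecidableEq V]

def rbound (s : ℕ) : ℕ → ℕ
  | 0 => 0
  | (t+1) => s * (rbound s t + 1) + 1

lemma le_rbound (s t : ℕ) (hs : 1 ≤ s) : t ≤ rbound s t := by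
  induction t with
  | zero => simp [rbound]
  | succ t ih =>
    have : rbound s t + 1 ≤ s * (rbound s t + 1) := Nat.le_mul_of_pos_left _ hs
    simp only [rbound]
    omega

lemma rbound_le (s t : ℕ) (hs : 1 ≤ s) : rbound s t ≤ (2*s)^t := by
  induction t with
  | zero => simp [rbound]
  | succ t ih =>
    rcases Nat.eq_zero_or_pos t with rfl | htpos
    · simp [rbound]; omega
    · have hB2 : 2 ≤ (2*s)^t := by
        calc (2:ℕ) ≤ 2*s := by omega
          _ = (2*s)^1 := (pow_one _).symm
          _ ≤ (2*s)^t := Nat.pow_le_pow_right (by omega) htpos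
      have h1 : s * rbound s t ≤ s * (2*s)^t := Nat.mul_le_mul_left _ ih
      have h2 : s * 2 ≤ s * (2*s)^t := Nat.mul_le_mul_left _ hB2
      have h3 : (2*s)^(t+1) = 2 * (s * (2*s)^t) := by ring
      simp only [rbound, Nat.mul_add, Nat.mul_one]
      omega

lemma exists_indep (G : SimpleGraph V) [DecidableRel G.Adj] (s : ℕ)
    (hcl : ∀ C : Finset V, (∀ x ∈ C, ∀ y ∈ C, x ≠ y → G.Adj x y) → C.card < s) :
    ∀ (t : ℕ) (U : Finset V), rbound s t ≤ U.card →
      ∃ B, B ⊆ U ∧ B.card = t ∧ ∀ x ∈ B, ∀ y ∈ B, ¬ G.Adj x y := by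
  intro t
  induction t with
  | zero => intro U _; exact ⟨∅, by simp⟩
  | succ t ih =>
    intro U hU
    by_cases h : ∃ v ∈ U, rbound s t ≤ ((U \ G.neighborFinset v).erase v).card
    · obtain ⟨v, hv, hcard⟩ := h
      obtain ⟨B, hBsub, hBcard, hBind⟩ := ih _ hcard
      have hvB : v ∉ B := fun hvB => (Finset.mem_erase.mp (hBsub hvB)).1 rfl
      refine ⟨insert v B, ?_, ?_, ?_⟩
      · intro x hx
        rcases Finset.mem_insert.mp hx with rfl | hx
        · exact hv
        · exact (Finset.mem_sdiff.mp (Finset.mem_of_mem_erase (hBsub hx))).1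
      · rw [Finset.card_insert_of_notMem hvB, hBcard]
      · have hkey : ∀ b ∈ B, ¬ G.Adj v b := by
          intro b hb
          have h2 := (Finset.mem_sdiff.mp (Finset.mem_of_mem_erase (hBsub hb))).2
          simpa [SimpleGraph.mem_neighborFinset] using h2
        intro x hx y hy hadj
        rcases Finset.mem_insert.mp hx with hxv | hx'
        · rcases Finset.mem_insert.mp hy with hyv | hy'
          · rw [hxv, hyv] at hadj; exact G.irrefl hadj
          · rw [hxv] at hadj; exact hkey y hy' hadj
        · rcases Finset.mem_insert.mp hy with hyv | hy'
          · rw [hyv] at hadj; exact hkey x hx' hadj.symm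
          · exact hBind x hx' y hy' hadj
    · push_neg at h
      exfalso
      have key : ∀ j ≤ s, ∃ C : Finset V, C ⊆ U ∧ C.card = j ∧
          (∀ x ∈ C, ∀ y ∈ C, x ≠ y → G.Adj x y) ∧
          U.card ≤ (U.filter (fun u => ∀ c ∈ C, G.Adj c u)).card + j * (rbound s t + 1) := by
        intro j
        induction j with
        | zero =>
          intro _
          refine ⟨∅, by simp, by simp, by simp, ?_⟩
          rw [Finset.filter_true_of_mem (by simp)]
          simp
        | succ j ihj =>
          intro hj
          obtain ⟨C, hCU, hCcard, hCcl, hCW⟩ := ihj (by omega)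
          set W := U.filter (fun u => ∀ c ∈ C, G.Adj c u) with hWdef
          have hWne : W.Nonempty := by
            rw [← Finset.card_pos]
            have h2 : (j+1) * (rbound s t + 1) ≤ s * (rbound s t + 1) :=
              Nat.mul_le_mul_right _ hj
            simp only [rbound] at hU
            have h3 : (j+1) * (rbound s t + 1) = j * (rbound s t + 1) + (rbound s t + 1) := by ring
            omega
          obtain ⟨v, hvW⟩ := hWne
          have hvU : v ∈ U := (Finset.mem_filter.mp hvW).1
          have hvadj : ∀ c ∈ C, G.Adj c v := (Finset.mem_filter.mp hvW).2
          have hvC : v ∉ C := fun hvC => G.irrefl (hvadj v hvC)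
          refine ⟨insert v C, Finset.insert_subset hvU hCU, ?_, ?_, ?_⟩
          · rw [Finset.card_insert_of_notMem hvC, hCcard]
          · intro x hx y hy hxy
            rcases Finset.mem_insert.mp hx with hxv | hx'
            · rcases Finset.mem_insert.mp hy with hyv | hy'
              · exact absurd (hxv.trans hyv.symm) hxy
              · rw [hxv]; exact (hvadj y hy').symm
            · rcases Finset.mem_insert.mp hy with hyv | hy'
              · rw [hyv]; exact hvadj x hx'
              · exact hCcl x hx' y hy' hxy
          · set W' := U.filter (fun u => ∀ c ∈ insert v C, G.Adj c u) with hW'def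
            have hWsplit : W ⊆ W' ∪ (W \ G.neighborFinset v) := by
              intro u hu
              by_cases hadj : G.Adj v u
              · apply Finset.mem_union_left
                simp only [hW'def, Finset.mem_filter, hWdef] at hu ⊢
                exact ⟨hu.1, fun c hc => (Finset.mem_insert.mp hc).elim
                  (fun hcv => hcv ▸ hadj) (hu.2 c)⟩
              · exact Finset.mem_union_right _ (Finset.mem_sdiff.mpr
                  ⟨hu, by simpa [SimpleGraph.mem_neighborFinset] using hadj⟩)
            have h1 : (U \ G.neighborFinset v).card ≤ rbound s t + 1 := by
              have hvmem : v ∈ U \ G.neighborFinset v :=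
                Finset.mem_sdiff.mpr ⟨hvU, by simp⟩
              have h4 := h v hvU
              rw [Finset.card_erase_of_mem hvmem] at h4
              have h5 : 1 ≤ (U \ G.neighborFinset v).card := Finset.card_pos.mpr ⟨v, hvmem⟩
              omega
            have h2 : W.card ≤ W'.card + (rbound s t + 1) := by
              calc W.card ≤ (W' ∪ (W \ G.neighborFinset v)).card := Finset.card_le_card hWsplit
                _ ≤ W'.card + (W \ G.neighborFinset v).card := Finset.card_union_le _ _
                _ ≤ W'.card + (U \ G.neighborFinset v).card := by
                    have hss : W \ G.neighborFinset v ⊆ U \ G.neighborFinset v := by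
                      intro u hu
                      have := Finset.mem_sdiff.mp hu
                      exact Finset.mem_sdiff.mpr ⟨Finset.filter_subset _ _ this.1, this.2⟩
                    have := Finset.card_le_card hss
                    omega
                _ ≤ W'.card + (rbound s t + 1) := by omega
            have h3 : (j+1)*(rbound s t + 1) = j*(rbound s t+1) + (rbound s t + 1) := by ring
            omega
      obtain ⟨C, _, hCcard, hCcl, _⟩ := key s le_rfl
      have := hcl C hCcl
      omega

lemma pow_le_descFactorial (m t : ℕ) : (m + 1 - t)^t ≤ Nat.descFactorial m t := by
  induction t with
  | zero => simp
  | succ t ih =>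
    rw [Nat.descFactorial_succ]
    have h1 : (m + 1 - (t+1)) = m - t := by omega
    rw [h1]
    calc (m - t)^(t+1) = (m-t) * (m-t)^t := by ring
      _ ≤ (m-t) * (m+1-t)^t := Nat.mul_le_mul_left _ (Nat.pow_le_pow_left (by omega) _)
      _ ≤ (m-t) * Nat.descFactorial m t := Nat.mul_le_mul_left _ ih

lemma count_indep (G : SimpleGraph V) [DecidableRel G.Adj] (s : ℕ) (hs : 1 ≤ s)
    (hcl : ∀ C : Finset V, (∀ x ∈ C, ∀ y ∈ C, x ≠ y → G.Adj x y) → C.card < s)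
    (t : ℕ) (U : Finset V) (hU : rbound s t ≤ U.card) :
    (U.card + 1 - t)^t ≤
      ((U.powersetCard t).filter (fun B => ∀ x ∈ B, ∀ y ∈ B, ¬ G.Adj x y)).card
        * (rbound s t)^t := by
  have hex := exists_indep G s hcl
  set F := rbound s t with hF
  set I := (U.powersetCard t).filter (fun B => ∀ x ∈ B, ∀ y ∈ B, ¬ G.Adj x y) with hI
  set m := U.card with hm
  have htF : t ≤ F := le_rbound s t hs
  have htm : t ≤ m := htF.trans hU
  have h1 : U.powersetCard F ⊆ I.biUnion (fun B => (U.powersetCard F).filter (fun P => B ⊆ P)) := by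
    intro P hP
    obtain ⟨hPU, hPcard⟩ := Finset.mem_powersetCard.mp hP
    obtain ⟨B, hBP, hBcard, hBind⟩ := hex t P (by omega)
    refine Finset.mem_biUnion.mpr ⟨B, ?_, ?_⟩
    · exact Finset.mem_filter.mpr ⟨Finset.mem_powersetCard.mpr ⟨hBP.trans hPU, hBcard⟩, hBind⟩
    · exact Finset.mem_filter.mpr ⟨hP, hBP⟩
  have h2 : ∀ B ∈ I, ((U.powersetCard F).filter (fun P => B ⊆ P)).card ≤ (m - t).choose (F - t) := by
    intro B hB
    obtain ⟨hBmem, -⟩ := Finset.mem_filter.mp hB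
    obtain ⟨hBU, hBcard⟩ := Finset.mem_powersetCard.mp hBmem
    have : ((U.powersetCard F).filter (fun P => B ⊆ P)).card ≤ ((U \ B).powersetCard (F - t)).card := by
      apply Finset.card_le_card_of_injOn (fun P => P \ B)
      · intro P hP
        obtain ⟨hPmem, hBP⟩ := Finset.mem_filter.mp hP
        obtain ⟨hPU, hPcard⟩ := Finset.mem_powersetCard.mp hPmem
        refine Finset.mem_powersetCard.mpr ⟨?_, ?_⟩
        · intro x hx
          have := Finset.mem_sdiff.mp hx
          exact Finset.mem_sdiff.mpr ⟨hPU this.1, this.2⟩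
        · rw [Finset.card_sdiff_of_subset hBP, hPcard, hBcard]
      · intro P1 hP1 P2 hP2 heq
        obtain ⟨-, hBP1⟩ := Finset.mem_filter.mp hP1
        obtain ⟨-, hBP2⟩ := Finset.mem_filter.mp hP2
        have heq' : P1 \ B = P2 \ B := heq
        rw [← Finset.sdiff_union_of_subset hBP1, ← Finset.sdiff_union_of_subset hBP2, heq']
    rwa [Finset.card_powersetCard, Finset.card_sdiff_of_subset hBU, hBcard] at this
  have h3 : m.choose F ≤ I.card * ((m - t).choose (F - t)) := by
    calc m.choose F = (U.powersetCard F).card := (Finset.card_powersetCard _ _).symm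
      _ ≤ (I.biUnion (fun B => (U.powersetCard F).filter (fun P => B ⊆ P))).card :=
          Finset.card_le_card h1
      _ ≤ ∑ B ∈ I, ((U.powersetCard F).filter (fun P => B ⊆ P)).card :=
          Finset.card_biUnion_le
      _ ≤ ∑ B ∈ I, (m - t).choose (F - t) := Finset.sum_le_sum h2
      _ = I.card * ((m - t).choose (F - t)) := by rw [Finset.sum_const, smul_eq_mul]
  have h4 : m.choose F * F.choose t = m.choose t * (m - t).choose (F - t) :=
    Nat.choose_mul (n := m) htF
  have hcpos : 0 < (m - t).choose (F - t) := Nat.choose_pos (by omega)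
  have h5 : m.choose t ≤ I.card * F.choose t := by
    have h6' := Nat.mul_le_mul_right (F.choose t) h3
    rw [h4] at h6'
    have h6 : m.choose t * (m - t).choose (F - t) ≤ I.card * F.choose t * (m - t).choose (F - t) := by
      calc m.choose t * (m - t).choose (F - t) ≤ I.card * (m - t).choose (F - t) * F.choose t := h6'
        _ = I.card * F.choose t * (m - t).choose (F - t) := by ring
    exact Nat.le_of_mul_le_mul_right h6 hcpos
  calc (m + 1 - t)^t ≤ Nat.descFactorial m t := pow_le_descFactorial m t
    _ = t.factorial * m.choose t := Nat.descFactorial_eq_factorial_mul_choose m t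
    _ ≤ t.factorial * (I.card * F.choose t) := Nat.mul_le_mul_left _ h5
    _ = I.card * (t.factorial * F.choose t) := by ring
    _ = I.card * Nat.descFactorial F t := by rw [Nat.descFactorial_eq_factorial_mul_choose]
    _ ≤ I.card * F^t := Nat.mul_le_mul_left _ (Nat.descFactorial_le_pow F t)

lemma eventually_rpow_ge (a C : ℝ) (ha : 0 < a) :
    ∃ n₀ : ℕ, ∀ n : ℕ, n₀ ≤ n → C ≤ (n : ℝ) ^ a := by
  have h := (tendsto_rpow_atTop ha).comp tendsto_natCast_atTop_atTop (α := ℕ)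
  have h2 := h.eventually_ge_atTop C
  rw [Filter.eventually_atTop] at h2
  obtain ⟨n₀, hn₀⟩ := h2
  exact ⟨n₀, fun n hn => hn₀ n hn⟩

lemma cast_sub_ge (a b : ℕ) : (a:ℝ) - b ≤ ((a - b : ℕ) : ℝ) := by
  rcases le_total b a with h | h
  · rw [Nat.cast_sub h]
  · have h1 : a - b = 0 := by omega
    rw [h1]
    have : (a:ℝ) ≤ b := by exact_mod_cast h
    simp
    linarith


set_option maxHeartbeats 2000000 in
lemma main_aux (t : ℕ) (ht : 1 ≤ t) (γ : ℝ) (hγ : 0 < γ) (hγ1 : γ ≤ 1) :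
    ∃ δ : ℝ, 0 < δ ∧
      ∃ n₀ : ℕ, ∀ n : ℕ, n₀ ≤ n →
        ∀ (G : SimpleGraph (Fin n)) [DecidableRel G.Adj],
          (n : ℝ) ^ ((1 : ℝ) - δ) ≤ (∑ v : Fin n, (G.degree v : ℝ)) / (n : ℝ) →
          (¬ ∃ S : Finset (Fin n), (n : ℝ) ^ δ ≤ (S.card : ℝ) ∧
            ∀ x ∈ S, ∀ y ∈ S, x ≠ y → G.Adj x y) →
          (n : ℝ) ^ (2 * (t : ℝ) - γ) ≤
            ((((Finset.powersetCard t (Finset.univ : Finset (Fin n))) ×ˢ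
               (Finset.powersetCard t (Finset.univ : Finset (Fin n)))).filter
              (fun p => Disjoint p.1 p.2 ∧
                (∀ x ∈ p.1, ∀ y ∈ p.1, ¬ G.Adj x y) ∧
                (∀ x ∈ p.2, ∀ y ∈ p.2, ¬ G.Adj x y) ∧
                (∀ x ∈ p.1, ∀ y ∈ p.2, G.Adj x y))).card : ℝ) := by
  have htR : (1:ℝ) ≤ t := by exact_mod_cast ht
  have ht0R : (0:ℝ) < t := by linarith
  set η : ℝ := γ / (4 * t) with hηdef
  set δ : ℝ := γ / (8 * ((t:ℝ) + 1) ^ 4) with hδdef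
  have hδ0 : 0 < δ := by positivity
  have hη0 : 0 < η := by positivity
  set Q : ℝ := 1 + t + (t:ℝ)^2 with hQdef
  have hQ1 : (1:ℝ) ≤ Q := by rw [hQdef]; nlinarith
  have key : 4 * ((1+(t:ℝ)+(t:ℝ)^2) * (1 + t) + (t:ℝ)^2) ≤ 8 * ((t:ℝ)+1)^4 := by
    have h2 : (0:ℝ) ≤ (t:ℝ)^2 := by positivity
    have h3 : (0:ℝ) ≤ (t:ℝ)^3 := by positivity
    have h4 : (0:ℝ) ≤ (t:ℝ)^4 := by positivity
    nlinarith [htR]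
  have hδQ : δ * (Q * (1 + t) + (t:ℝ)^2) ≤ γ / 4 := by
    rw [hδdef, hQdef]
    rw [div_mul_eq_mul_div, div_le_div_iff₀ (by positivity) (by norm_num)]
    nlinarith [mul_le_mul_of_nonneg_left key hγ.le]
  have hδQ' : δ * Q ≤ γ / 4 := by
    refine le_trans ?_ hδQ
    have hQ0 : (0:ℝ) ≤ Q := by linarith
    have : 0 ≤ δ * (Q * t + (t:ℝ)^2) := by
      apply mul_nonneg hδ0.le
      have : (0:ℝ) ≤ (t:ℝ)^2 := by positivity
      nlinarith [hQ0, htR]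
    nlinarith
  have hηle : η ≤ γ / 4 := by
    rw [hηdef, div_le_div_iff₀ (by positivity) (by norm_num)]
    nlinarith
  have hηt : η * t = γ / 4 := by
    rw [hηdef]; field_simp
  have hδQ14 : δ * Q ≤ 1/4 := by linarith
  set β : ℝ := 1 - δ*Q - η with hβdef
  have hβhalf : 1/2 ≤ β := by
    have : η ≤ 1/4 := by linarith
    rw [hβdef]; linarith
  have hδle : δ ≤ δ * Q := by nlinarith [hδ0.le]
  have hδtle : δ * t ≤ δ * Q := by
    have : (t:ℝ) ≤ Q := by rw [hQdef]; nlinarith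
    nlinarith [hδ0.le]
  have h1δ : (0:ℝ) < 1 - δ := by linarith
  have hexp1 : (0:ℝ) < 1 - δ - δ*t := by linarith
  have hβδt : (0:ℝ) < β - δ*t := by linarith
  set A : ℝ := 4^t * 4^(t*t) with hAdef
  have hA0 : (0:ℝ) < A := by rw [hAdef]; positivity
  obtain ⟨N1, hN1⟩ := eventually_rpow_ge (1-δ) (4*t) h1δ
  obtain ⟨N2, hN2⟩ := eventually_rpow_ge (1-δ-δ*t) (2*4^t) hexp1
  obtain ⟨N3, hN3⟩ := eventually_rpow_ge η (4*A) hη0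
  obtain ⟨N4, hN4⟩ := eventually_rpow_ge β (4*t) (by linarith)
  obtain ⟨N5, hN5⟩ := eventually_rpow_ge (β-δ*t) (2*4^t) hβδt
  obtain ⟨N6, hN6⟩ := eventually_rpow_ge (γ/2) (4*A^2) (by linarith)
  refine ⟨δ, hδ0, max (max (max N1 N2) (max N3 N4)) (max (max N5 N6) 1), ?_⟩
  intro n hn G instG hdeg hncl
  simp only [max_le_iff] at hn
  obtain ⟨⟨⟨hN1n, hN2n⟩, hN3n, hN4n⟩, ⟨hN5n, hN6n⟩, hn1⟩ := hn
  have E1 := hN1 n hN1n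
  have E2 := hN2 n hN2n
  have E3 := hN3 n hN3n
  have E4 := hN4 n hN4n
  have E5 := hN5 n hN5n
  have E6 := hN6 n hN6n
  have hn0R : (0:ℝ) < n := by exact_mod_cast hn1
  have hn1R : (1:ℝ) ≤ n := by exact_mod_cast hn1
  -- clique bound
  set s : ℕ := ⌈(n:ℝ)^δ⌉₊ with hsdef
  have hcl : ∀ C : Finset (Fin n), (∀ x ∈ C, ∀ y ∈ C, x ≠ y → G.Adj x y) → C.card < s := by
    intro C hC
    by_contra hge
    push_neg at hge
    exact hncl ⟨C, le_trans (Nat.le_ceil _) (by exact_mod_cast hge), hC⟩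
  have hrp0 : (0:ℝ) < (n:ℝ)^δ := Real.rpow_pos_of_pos hn0R δ
  have hrp1 : (1:ℝ) ≤ (n:ℝ)^δ := by
    calc (1:ℝ) = 1^δ := (Real.one_rpow δ).symm
      _ ≤ (n:ℝ)^δ := Real.rpow_le_rpow (by norm_num) hn1R hδ0.le
  have hs1 : 1 ≤ s := Nat.one_le_iff_ne_zero.mpr (by
    rw [hsdef]
    exact Nat.ceil_pos.mpr hrp0 |>.ne')
  have hsR : (s:ℝ) ≤ 2*(n:ℝ)^δ := by
    have := Nat.ceil_lt_add_one hrp0.le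
    rw [hsdef]
    push_cast
    linarith
  set F : ℕ := rbound s t with hFdef
  have htF : t ≤ F := le_rbound s t hs1
  have hFR : (F:ℝ) ≤ 4^t * (n:ℝ)^(δ*t) := by
    have h1 : (F:ℝ) ≤ ((2*s)^t : ℕ) := by exact_mod_cast rbound_le s t hs1
    have h2 : (((2*s)^t : ℕ):ℝ) = ((2*s:ℕ):ℝ)^t := by push_cast; ring
    have h3 : ((2*s:ℕ):ℝ) ≤ 4*(n:ℝ)^δ := by push_cast; linarith
    have h4 : (((2*s):ℕ):ℝ)^t ≤ (4*(n:ℝ)^δ)^t := by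
      apply pow_le_pow_left₀ (by positivity) h3
    have h5 : (4*(n:ℝ)^δ)^t = 4^t * ((n:ℝ)^δ)^t := by rw [mul_pow]
    have h6 : ((n:ℝ)^δ)^t = (n:ℝ)^(δ*t) := by
      rw [← Real.rpow_natCast ((n:ℝ)^δ) t, ← Real.rpow_mul hn0R.le]
    linarith [h1.trans (h2 ▸ (h4.trans_eq (h5.trans (by rw [h6]))))]
  -- degree sum
  set E2n : ℕ := ∑ v : Fin n, G.degree v with hE2def
  have hcast : (∑ v : Fin n, (G.degree v : ℝ)) = (E2n:ℝ) := by
    rw [hE2def]; push_cast; rfl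
  have hnn : (n:ℝ)^(2-δ) = (n:ℝ)^((1:ℝ)-δ) * n := by
    rw [show (2:ℝ)-δ = ((1:ℝ)-δ)+1 by ring, Real.rpow_add hn0R, Real.rpow_one]
  have hE2R : (n:ℝ)^(2-δ) ≤ (E2n:ℝ) := by
    rw [hcast] at hdeg
    rw [le_div_iff₀ hn0R] at hdeg
    rw [hnn]
    exact hdeg
  set W : Finset (Fin n) := Finset.univ.filter (fun v => (E2n:ℝ) ≤ 2*(n:ℝ)*(G.degree v)) with hWdef
  have hWdeg : ∀ v ∈ W, (n:ℝ)^((1:ℝ)-δ)/2 ≤ (G.degree v:ℝ) := by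
    intro v hv
    have h1 := (Finset.mem_filter.mp hv).2
    have h2 : (n:ℝ)^((1:ℝ)-δ) * n ≤ 2*(n:ℝ)*(G.degree v) := by
      rw [← hnn]
      exact hE2R.trans h1
    nlinarith [hn0R]
  have hdegn : ∀ v : Fin n, (G.degree v:ℝ) ≤ n := by
    intro v
    have h1 : G.degree v ≤ n := by
      rw [← SimpleGraph.card_neighborFinset_eq_degree]
      calc (G.neighborFinset v).card ≤ (Finset.univ : Finset (Fin n)).card := Finset.card_le_univ _
        _ = n := by simp
    exact_mod_cast h1
  have hWcard : (n:ℝ)^((1:ℝ)-δ)/2 ≤ (W.card:ℝ) := by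
    have hsplit := Finset.sum_filter_add_sum_filter_not Finset.univ
      (fun v => (E2n:ℝ) ≤ 2*(n:ℝ)*(G.degree v)) (fun v => (G.degree v:ℝ))
    have hterm : ∀ v ∈ Finset.univ.filter (fun v => ¬ ((E2n:ℝ) ≤ 2*(n:ℝ)*(G.degree v))),
        (G.degree v:ℝ) ≤ (E2n:ℝ)/(2*n) := by
      intro v hv
      have h1 := (Finset.mem_filter.mp hv).2
      push_neg at h1
      rw [le_div_iff₀ (by positivity)]
      nlinarith [h1]
    have hsmall : ∑ v ∈ Finset.univ.filter (fun v => ¬ ((E2n:ℝ) ≤ 2*(n:ℝ)*(G.degree v))),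
        (G.degree v:ℝ) ≤ (E2n:ℝ)/2 := by
      calc ∑ v ∈ Finset.univ.filter (fun v => ¬ ((E2n:ℝ) ≤ 2*(n:ℝ)*(G.degree v))), (G.degree v:ℝ)
          ≤ (Finset.univ.filter (fun v => ¬ ((E2n:ℝ) ≤ 2*(n:ℝ)*(G.degree v)))).card • ((E2n:ℝ)/(2*n)) :=
            Finset.sum_le_card_nsmul _ _ _ hterm
        _ = ((Finset.univ.filter (fun v => ¬ ((E2n:ℝ) ≤ 2*(n:ℝ)*(G.degree v)))).card : ℝ) * ((E2n:ℝ)/(2*n)) := by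
            rw [nsmul_eq_mul]
        _ ≤ (n:ℝ) * ((E2n:ℝ)/(2*n)) := by
            apply mul_le_mul_of_nonneg_right _ (by positivity)
            have h1 : (Finset.univ.filter (fun v => ¬ ((E2n:ℝ) ≤ 2*(n:ℝ)*(G.degree v)))).card ≤ n := by
              calc _ ≤ (Finset.univ : Finset (Fin n)).card := Finset.card_filter_le _ _
                _ = n := by simp
            exact_mod_cast h1
        _ = (E2n:ℝ)/2 := by
            have hne : (n:ℝ) ≠ 0 := ne_of_gt hn0R
            field_simp
    have hWsum : (E2n:ℝ)/2 ≤ ∑ v ∈ W, (G.degree v:ℝ) := by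
      have := hcast
      rw [← hsplit] at this
      rw [hWdef]
      linarith
    have hWn : ∑ v ∈ W, (G.degree v:ℝ) ≤ (W.card:ℝ) * n := by
      calc ∑ v ∈ W, (G.degree v:ℝ) ≤ W.card • (n:ℝ) :=
            Finset.sum_le_card_nsmul _ _ _ (fun v _ => hdegn v)
        _ = (W.card:ℝ) * n := by rw [nsmul_eq_mul]
    have h2 : (n:ℝ)^((1:ℝ)-δ)/2 * n ≤ (W.card:ℝ) * n := by
      have h3 : (n:ℝ)^((1:ℝ)-δ)/2 * n = (n:ℝ)^(2-δ)/2 := by rw [hnn]; ring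
      rw [h3]
      linarith [hWsum, hWn, hE2R]
    exact le_of_mul_le_mul_right h2 hn0R
  set I : Finset (Finset (Fin n)) := (Finset.powersetCard t (Finset.univ : Finset (Fin n))).filter
      (fun B => ∀ x ∈ B, ∀ y ∈ B, ¬ G.Adj x y) with hIdef
  set cN : Finset (Fin n) → Finset (Fin n) :=
      (fun B => Finset.univ.filter (fun u => ∀ x ∈ B, G.Adj x u)) with hcNdef
  have hdc : ∑ B ∈ I, (cN B).card
      = ∑ v : Fin n, (I.filter (fun B => B ⊆ G.neighborFinset v)).card := by
    calc ∑ B ∈ I, (cN B).card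
        = ∑ B ∈ I, ∑ v : Fin n, (if ∀ x ∈ B, G.Adj x v then 1 else 0) := by
          apply Finset.sum_congr rfl; intro B _
          rw [hcNdef, Finset.card_filter]
      _ = ∑ v : Fin n, ∑ B ∈ I, (if ∀ x ∈ B, G.Adj x v then 1 else 0) := Finset.sum_comm
      _ = ∑ v : Fin n, (I.filter (fun B => B ⊆ G.neighborFinset v)).card := by
          apply Finset.sum_congr rfl; intro v _
          rw [Finset.card_filter]
          apply Finset.sum_congr rfl; intro B _
          have hiff : (B ⊆ G.neighborFinset v) ↔ (∀ x ∈ B, G.Adj x v) := by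
            constructor
            · intro hsub x hx
              exact ((SimpleGraph.mem_neighborFinset _ _ _).mp (hsub hx)).symm
            · intro hall x hx
              exact (SimpleGraph.mem_neighborFinset _ _ _).mpr ((hall x hx).symm)
          exact (if_congr hiff rfl rfl).symm
  have hFn2 : (F:ℝ) ≤ (n:ℝ)^((1:ℝ)-δ)/2 := by
    have h2 : (n:ℝ)^((1:ℝ)-δ-δ*t) * (n:ℝ)^(δ*t) = (n:ℝ)^((1:ℝ)-δ) := by
      rw [← Real.rpow_add hn0R]; congr 1; ring
    have h3 := mul_le_mul_of_nonneg_right E2 (le_of_lt (Real.rpow_pos_of_pos hn0R (δ*t)))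
    rw [h2] at h3
    have h4 : 2*4^t * (n:ℝ)^(δ*t) ≤ (n:ℝ)^((1:ℝ)-δ) := h3
    linarith [hFR]
  have hWdegF : ∀ v ∈ W, F ≤ G.degree v := by
    intro v hv
    have h1 : (F:ℝ) ≤ (G.degree v : ℝ) := le_trans hFn2 (hWdeg v hv)
    exact_mod_cast h1
  have hvbound : ∀ v ∈ W, (((n:ℝ)^((1:ℝ)-δ)/4))^t
      ≤ ((I.filter (fun B => B ⊆ G.neighborFinset v)).card : ℝ) * (F:ℝ)^t := by
    intro v hv
    have hveq : I.filter (fun B => B ⊆ G.neighborFinset v)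
        = ((G.neighborFinset v).powersetCard t).filter
            (fun B => ∀ x ∈ B, ∀ y ∈ B, ¬ G.Adj x y) := by
      ext B
      simp only [hIdef, Finset.mem_filter, Finset.mem_powersetCard, Finset.subset_univ, true_and]
      tauto
    have hFdeg : rbound s t ≤ (G.neighborFinset v).card := by
      rw [SimpleGraph.card_neighborFinset_eq_degree]
      exact hWdegF v hv
    have hcnt := count_indep G s hs1 hcl t (G.neighborFinset v) hFdeg
    rw [SimpleGraph.card_neighborFinset_eq_degree] at hcnt
    have hc1 : (((G.degree v + 1 - t : ℕ)):ℝ)^t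
        ≤ ((I.filter (fun B => B ⊆ G.neighborFinset v)).card : ℝ) * (F:ℝ)^t := by
      rw [hveq]
      have hcnt2 : (G.degree v + 1 - t)^t ≤
          (((G.neighborFinset v).powersetCard t).filter
            (fun B => ∀ x ∈ B, ∀ y ∈ B, ¬ G.Adj x y)).card * (rbound s t)^t := by
        convert hcnt using 5
      exact_mod_cast hcnt2
    refine le_trans ?_ hc1
    apply pow_le_pow_left₀ (by positivity)
    have htdeg : t ≤ G.degree v := le_trans htF (hWdegF v hv)
    rw [Nat.cast_sub (by omega)]
    push_cast
    have hd := hWdeg v hv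
    linarith [E1]
  set Sc : ℝ := ∑ B ∈ I, ((cN B).card : ℝ) with hScdef
  have hSc0 : 0 ≤ Sc := Finset.sum_nonneg (fun B _ => by positivity)
  have hdcR : ∑ v : Fin n, ((I.filter (fun B => B ⊆ G.neighborFinset v)).card : ℝ) = Sc := by
    rw [hScdef]
    exact_mod_cast hdc.symm
  have hScF : ((n:ℝ)^((1:ℝ)-δ)/2) * ((n:ℝ)^((1:ℝ)-δ)/4)^t ≤ Sc * (F:ℝ)^t := by
    have h1 : ∑ v ∈ W, (((n:ℝ)^((1:ℝ)-δ)/4)^t)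
        ≤ ∑ v ∈ W, ((I.filter (fun B => B ⊆ G.neighborFinset v)).card : ℝ) * (F:ℝ)^t :=
      Finset.sum_le_sum hvbound
    rw [Finset.sum_const, nsmul_eq_mul] at h1
    have h2 : ∑ v ∈ W, ((I.filter (fun B => B ⊆ G.neighborFinset v)).card : ℝ) * (F:ℝ)^t
        ≤ ∑ v : Fin n, ((I.filter (fun B => B ⊆ G.neighborFinset v)).card : ℝ) * (F:ℝ)^t :=
      Finset.sum_le_sum_of_subset_of_nonneg (Finset.subset_univ W) (fun v _ _ => by positivity)
    have h3 : ∑ v : Fin n, ((I.filter (fun B => B ⊆ G.neighborFinset v)).card : ℝ) * (F:ℝ)^t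
        = Sc * (F:ℝ)^t := by
      rw [← Finset.sum_mul, hdcR]
    have h4 : ((n:ℝ)^((1:ℝ)-δ)/2) * ((n:ℝ)^((1:ℝ)-δ)/4)^t
        ≤ (W.card:ℝ) * ((n:ℝ)^((1:ℝ)-δ)/4)^t :=
      mul_le_mul_of_nonneg_right hWcard (by positivity)
    linarith
  set e1 : ℝ := 1 + t - δ*Q with he1def
  have hFt : (F:ℝ)^t ≤ 4^(t*t) * (n:ℝ)^(δ*(t*t)) := by
    calc (F:ℝ)^t ≤ (4^t * (n:ℝ)^(δ*t))^t := pow_le_pow_left₀ (by positivity) hFR t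
      _ = ((4:ℝ)^t)^t * ((n:ℝ)^(δ*t))^t := mul_pow _ _ t
      _ = 4^(t*t) * (n:ℝ)^(δ*(t*t)) := by
          rw [← pow_mul]
          congr 1
          rw [← Real.rpow_natCast ((n:ℝ)^(δ*t)) t, ← Real.rpow_mul hn0R.le]
          congr 1
          push_cast
          ring
  have hSc : (1/(2*A)) * (n:ℝ)^e1 ≤ Sc := by
    have h4 : (n:ℝ)^((1:ℝ)-δ) * (n:ℝ)^(((1:ℝ)-δ)*t) = (n:ℝ)^(((1:ℝ)-δ)*(1+t)) := by
      rw [← Real.rpow_add hn0R]; congr 1; ring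
    have hXt : ((n:ℝ)^((1:ℝ)-δ))^t = (n:ℝ)^(((1:ℝ)-δ)*t) := by
      rw [← Real.rpow_natCast ((n:ℝ)^((1:ℝ)-δ)) t, ← Real.rpow_mul hn0R.le]
    have hlhs : ((n:ℝ)^((1:ℝ)-δ)/2) * ((n:ℝ)^((1:ℝ)-δ)/4)^t
        = (n:ℝ)^(((1:ℝ)-δ)*(1+t)) / (2*4^t) := by
      rw [div_pow, ← h4, ← hXt]
      field_simp
    have h5 : Sc * (F:ℝ)^t ≤ Sc * (4^(t*t) * (n:ℝ)^(δ*(t*t))) :=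
      mul_le_mul_of_nonneg_left hFt hSc0
    have h6 : (n:ℝ)^(((1:ℝ)-δ)*(1+t)) / (2*4^t) ≤ Sc * (4^(t*t) * (n:ℝ)^(δ*(t*t))) := by
      rw [← hlhs]
      linarith [hScF]
    have h7 : (n:ℝ)^e1 * (n:ℝ)^(δ*(t*t)) = (n:ℝ)^(((1:ℝ)-δ)*(1+t)) := by
      rw [← Real.rpow_add hn0R, he1def, hQdef]
      congr 1
      push_cast
      ring
    have hp1 : (0:ℝ) < (n:ℝ)^(δ*(t*t)) := Real.rpow_pos_of_pos hn0R _
    have hp2 : (0:ℝ) < (4:ℝ)^t := by positivity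
    have hp3 : (0:ℝ) < (4:ℝ)^(t*t) := by positivity
    rw [div_le_iff₀ (by positivity)] at h6
    rw [← h7] at h6
    -- h6 : n^e1 * n^(δtt) ≤ Sc * (4^(tt) * n^(δtt)) * (2*4^t)
    have h8 : (n:ℝ)^e1 * (n:ℝ)^(δ*(t*t)) ≤ (2*A*Sc) * (n:ℝ)^(δ*(t*t)) := by
      calc (n:ℝ)^e1 * (n:ℝ)^(δ*(t*t)) ≤ Sc * (4^(t*t) * (n:ℝ)^(δ*(t*t))) * (2*4^t) := h6
        _ = (2*A*Sc) * (n:ℝ)^(δ*(t*t)) := by rw [hAdef]; ring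
    have h9 : (n:ℝ)^e1 ≤ 2*A*Sc := le_of_mul_le_mul_right h8 hp1
    rw [div_mul_eq_mul_div, div_le_iff₀ (by positivity)]
    linarith
  set BIG : Finset (Finset (Fin n)) := I.filter (fun B => (n:ℝ)^β ≤ ((cN B).card:ℝ)) with hBIGdef
  have hIcard : (I.card:ℝ) ≤ (n:ℝ)^(t:ℝ) := by
    have h1 : I.card ≤ n^t := by
      calc I.card ≤ (Finset.powersetCard t (Finset.univ : Finset (Fin n))).card :=
            Finset.card_filter_le _ _
        _ = (Fintype.card (Fin n)).choose t := by
            rw [Finset.card_powersetCard, Finset.card_univ]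
        _ = n.choose t := by rw [Fintype.card_fin]
        _ ≤ n^t := Nat.choose_le_pow n t
    calc (I.card:ℝ) ≤ ((n^t : ℕ):ℝ) := by exact_mod_cast h1
      _ = (n:ℝ)^(t:ℝ) := by push_cast; rw [Real.rpow_natCast]
  have hcNn : ∀ B, ((cN B).card:ℝ) ≤ n := by
    intro B
    have h1 : (cN B).card ≤ n := by
      calc (cN B).card ≤ (Finset.univ : Finset (Fin n)).card := Finset.card_le_univ _
        _ = n := by simp
    exact_mod_cast h1
  have hsplitI := Finset.sum_filter_add_sum_filter_not I
    (fun B => (n:ℝ)^β ≤ ((cN B).card:ℝ)) (fun B => ((cN B).card:ℝ))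
  have hsmallI : ∑ B ∈ I.filter (fun B => ¬ ((n:ℝ)^β ≤ ((cN B).card:ℝ))), ((cN B).card:ℝ)
      ≤ (n:ℝ)^((t:ℝ)+β) := by
    have hterm : ∀ B ∈ I.filter (fun B => ¬ ((n:ℝ)^β ≤ ((cN B).card:ℝ))),
        ((cN B).card:ℝ) ≤ (n:ℝ)^β := by
      intro B hB
      have := (Finset.mem_filter.mp hB).2
      push_neg at this
      exact this.le
    calc ∑ B ∈ I.filter (fun B => ¬ ((n:ℝ)^β ≤ ((cN B).card:ℝ))), ((cN B).card:ℝ)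
        ≤ (I.filter (fun B => ¬ ((n:ℝ)^β ≤ ((cN B).card:ℝ)))).card • ((n:ℝ)^β) :=
          Finset.sum_le_card_nsmul _ _ _ hterm
      _ = ((I.filter (fun B => ¬ ((n:ℝ)^β ≤ ((cN B).card:ℝ)))).card:ℝ) * (n:ℝ)^β := by
          rw [nsmul_eq_mul]
      _ ≤ (n:ℝ)^(t:ℝ) * (n:ℝ)^β := by
          apply mul_le_mul_of_nonneg_right _ (Real.rpow_pos_of_pos hn0R β).le
          refine le_trans ?_ hIcard
          exact_mod_cast Finset.card_filter_le _ _
      _ = (n:ℝ)^((t:ℝ)+β) := by rw [← Real.rpow_add hn0R]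
  have he1tβ : e1 - η = (t:ℝ) + β := by rw [he1def, hβdef]; ring
  have hsmallI2 : (n:ℝ)^((t:ℝ)+β) ≤ (1/(4*A)) * (n:ℝ)^e1 := by
    have h1 : (n:ℝ)^((t:ℝ)+β) * (n:ℝ)^η = (n:ℝ)^e1 := by
      rw [← Real.rpow_add hn0R]
      congr 1
      linarith [he1tβ]
    have h2 : (n:ℝ)^((t:ℝ)+β) * (4*A) ≤ (n:ℝ)^((t:ℝ)+β) * (n:ℝ)^η :=
      mul_le_mul_of_nonneg_left E3 (Real.rpow_pos_of_pos hn0R _).le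
    rw [h1] at h2
    have h4 : (1/(4*A)) * (n:ℝ)^e1 = (n:ℝ)^e1/(4*A) := by ring
    rw [h4, le_div_iff₀ (by positivity)]
    linarith
  have hBIGsum : (1/(4*A)) * (n:ℝ)^e1 ≤ ∑ B ∈ BIG, ((cN B).card:ℝ) := by
    have h1 : ∑ B ∈ BIG, ((cN B).card:ℝ)
        = Sc - ∑ B ∈ I.filter (fun B => ¬ ((n:ℝ)^β ≤ ((cN B).card:ℝ))), ((cN B).card:ℝ) := by
      rw [hBIGdef, hScdef, ← hsplitI]
      ring
    have hAeq : 1/(2*A) * (n:ℝ)^e1 - 1/(4*A) * (n:ℝ)^e1 = 1/(4*A) * (n:ℝ)^e1 := by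
      field_simp
      ring
    linarith [hSc, hsmallI, hsmallI2]
  have hBIGcard : (1/(4*A)) * (n:ℝ)^(e1-1) ≤ (BIG.card:ℝ) := by
    have h1 : ∑ B ∈ BIG, ((cN B).card:ℝ) ≤ (BIG.card:ℝ) * n := by
      calc ∑ B ∈ BIG, ((cN B).card:ℝ) ≤ BIG.card • (n:ℝ) :=
            Finset.sum_le_card_nsmul _ _ _ (fun B _ => hcNn B)
        _ = (BIG.card:ℝ) * n := by rw [nsmul_eq_mul]
    have h2 : (n:ℝ)^(e1-1) * (n:ℝ)^(1:ℝ) = (n:ℝ)^e1 := by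
      rw [← Real.rpow_add hn0R]; congr 1; ring
    have h3 : (1/(4*A)) * (n:ℝ)^(e1-1) * n ≤ (BIG.card:ℝ) * n := by
      calc (1/(4*A)) * (n:ℝ)^(e1-1) * n
          = (1/(4*A)) * ((n:ℝ)^(e1-1) * (n:ℝ)^(1:ℝ)) := by rw [Real.rpow_one]; ring
        _ = (1/(4*A)) * (n:ℝ)^e1 := by rw [h2]
        _ ≤ ∑ B ∈ BIG, ((cN B).card:ℝ) := hBIGsum
        _ ≤ (BIG.card:ℝ) * n := h1
    exact le_of_mul_le_mul_right h3 hn0R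
  -- step 3: many independent sets inside each big common neighborhood
  have hFβ : (F:ℝ) ≤ (n:ℝ)^β/2 := by
    have h2 : (n:ℝ)^(β-δ*t) * (n:ℝ)^(δ*t) = (n:ℝ)^β := by
      rw [← Real.rpow_add hn0R]; congr 1; ring
    have h3 := mul_le_mul_of_nonneg_right E5 (le_of_lt (Real.rpow_pos_of_pos hn0R (δ*t)))
    rw [h2] at h3
    have h4 : 2*4^t * (n:ℝ)^(δ*t) ≤ (n:ℝ)^β := h3
    linarith [hFR]
  have hJB : ∀ B ∈ BIG, (1/A) * (n:ℝ)^(β*t - δ*(t*t)) ≤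
      ((((cN B \ B).powersetCard t).filter
        (fun B2 => ∀ x ∈ B2, ∀ y ∈ B2, ¬ G.Adj x y)).card : ℝ) := by
    intro B hB
    have hBI : B ∈ I := (Finset.mem_filter.mp hB).1
    have hBcardt : B.card = t := (Finset.mem_powersetCard.mp (Finset.mem_filter.mp hBI).1).2
    have hcNB : (n:ℝ)^β ≤ ((cN B).card:ℝ) := (Finset.mem_filter.mp hB).2
    have hUcard : (n:ℝ)^β/2 ≤ ((cN B \ B).card:ℝ) := by
      have hsd : (cN B).card - B.card ≤ (cN B \ B).card := Finset.le_card_sdiff B (cN B)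
      have hcast := cast_sub_ge ((cN B).card) B.card
      have h1 : ((cN B).card:ℝ) - B.card ≤ ((cN B \ B).card:ℝ) := by
        refine le_trans hcast ?_
        exact_mod_cast hsd
      rw [hBcardt] at h1
      linarith [E4]
    have hUF : rbound s t ≤ (cN B \ B).card := by
      have h1 : (F:ℝ) ≤ ((cN B \ B).card:ℝ) := le_trans hFβ hUcard
      exact_mod_cast h1
    have hcnt := count_indep G s hs1 hcl t (cN B \ B) hUF
    set JBc : ℕ := (((cN B \ B).powersetCard t).filter
        (fun B2 => ∀ x ∈ B2, ∀ y ∈ B2, ¬ G.Adj x y)).card with hJBdef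
    have hcnt2 : ((cN B \ B).card + 1 - t)^t ≤ JBc * (rbound s t)^t := by
      rw [hJBdef]
      convert hcnt using 5
    have htU : t ≤ (cN B \ B).card := le_trans htF hUF
    have hbase : (n:ℝ)^β/4 ≤ (((cN B \ B).card + 1 - t : ℕ):ℝ) := by
      rw [Nat.cast_sub (by omega)]
      push_cast
      linarith [E4, hUcard]
    have hc1 : (((cN B \ B).card + 1 - t : ℕ):ℝ)^t ≤ (JBc:ℝ) * (F:ℝ)^t := by
      exact_mod_cast hcnt2
    have h2 : ((n:ℝ)^β/4)^t ≤ (JBc:ℝ) * (F:ℝ)^t :=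
      le_trans (pow_le_pow_left₀ (by positivity) hbase t) hc1
    have h3 : (JBc:ℝ) * (F:ℝ)^t ≤ (JBc:ℝ) * (4^(t*t) * (n:ℝ)^(δ*(t*t))) :=
      mul_le_mul_of_nonneg_left hFt (by positivity)
    have hβt : ((n:ℝ)^β)^t = (n:ℝ)^(β*t) := by
      rw [← Real.rpow_natCast ((n:ℝ)^β) t, ← Real.rpow_mul hn0R.le]
    have hlhs2 : ((n:ℝ)^β/4)^t = (n:ℝ)^(β*t)/4^t := by
      rw [div_pow, hβt]
    have h6 : (n:ℝ)^(β*t) / 4^t ≤ (JBc:ℝ) * (4^(t*t) * (n:ℝ)^(δ*(t*t))) := by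
      rw [← hlhs2]
      linarith
    have h7 : (n:ℝ)^(β*t - δ*(t*t)) * (n:ℝ)^(δ*(t*t)) = (n:ℝ)^(β*t) := by
      rw [← Real.rpow_add hn0R]
      congr 1
      ring
    rw [div_le_iff₀ (by positivity)] at h6
    have hp1 : (0:ℝ) < (n:ℝ)^(δ*(t*t)) := Real.rpow_pos_of_pos hn0R _
    have h8 : (n:ℝ)^(β*t - δ*(t*t)) * (n:ℝ)^(δ*(t*t)) ≤ (A * (JBc:ℝ)) * (n:ℝ)^(δ*(t*t)) := by
      calc (n:ℝ)^(β*t - δ*(t*t)) * (n:ℝ)^(δ*(t*t)) = (n:ℝ)^(β*t) := h7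
        _ ≤ (JBc:ℝ) * (4^(t*t) * (n:ℝ)^(δ*(t*t))) * 4^t := h6
        _ = (A * (JBc:ℝ)) * (n:ℝ)^(δ*(t*t)) := by rw [hAdef]; ring
    have h9 : (n:ℝ)^(β*t - δ*(t*t)) ≤ A * (JBc:ℝ) := le_of_mul_le_mul_right h8 hp1
    have h10 : (1/A) * (n:ℝ)^(β*t - δ*(t*t)) = (n:ℝ)^(β*t - δ*(t*t))/A := by ring
    rw [h10, div_le_iff₀ hA0]
    linarith
  set T0 : Finset (Finset (Fin n) × Finset (Fin n)) :=
    (((Finset.powersetCard t (Finset.univ : Finset (Fin n))) ×ˢ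
       (Finset.powersetCard t (Finset.univ : Finset (Fin n)))).filter
      (fun p => Disjoint p.1 p.2 ∧
        (∀ x ∈ p.1, ∀ y ∈ p.1, ¬ G.Adj x y) ∧
        (∀ x ∈ p.2, ∀ y ∈ p.2, ¬ G.Adj x y) ∧
        (∀ x ∈ p.1, ∀ y ∈ p.2, G.Adj x y))) with hT0def
  have hsubT : BIG.biUnion (fun B => (((cN B \ B).powersetCard t).filter
      (fun B2 => ∀ x ∈ B2, ∀ y ∈ B2, ¬ G.Adj x y)).image (fun C => (B, C))) ⊆ T0 := by
    intro p hp
    obtain ⟨B, hB, hp2⟩ := Finset.mem_biUnion.mp hp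
    obtain ⟨C, hC, rfl⟩ := Finset.mem_image.mp hp2
    obtain ⟨hCmem, hCind⟩ := Finset.mem_filter.mp hC
    obtain ⟨hCsub, hCcard⟩ := Finset.mem_powersetCard.mp hCmem
    have hBI : B ∈ I := (Finset.mem_filter.mp hB).1
    obtain ⟨hBmem, hBind⟩ := Finset.mem_filter.mp hBI
    rw [hT0def]
    refine Finset.mem_filter.mpr ⟨Finset.mem_product.mpr ⟨hBmem, ?_⟩, ?_, ?_, ?_, ?_⟩
    · exact Finset.mem_powersetCard.mpr ⟨Finset.subset_univ C, hCcard⟩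
    · rw [Finset.disjoint_left]
      intro a haB haC
      exact (Finset.mem_sdiff.mp (hCsub haC)).2 haB
    · exact hBind
    · exact hCind
    · intro x hx y hy
      have hy2 := (Finset.mem_sdiff.mp (hCsub hy)).1
      rw [hcNdef] at hy2
      exact (Finset.mem_filter.mp hy2).2 x hx
  have hdisjT : ∀ B1 ∈ BIG, ∀ B2 ∈ BIG, B1 ≠ B2 →
      Disjoint ((((cN B1 \ B1).powersetCard t).filter
          (fun C => ∀ x ∈ C, ∀ y ∈ C, ¬ G.Adj x y)).image (fun C => (B1, C)))
        ((((cN B2 \ B2).powersetCard t).filter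
          (fun C => ∀ x ∈ C, ∀ y ∈ C, ¬ G.Adj x y)).image (fun C => (B2, C))) := by
    intro B1 _ B2 _ hne
    rw [Finset.disjoint_left]
    intro p hp1 hp2
    obtain ⟨C1, _, hpe1⟩ := Finset.mem_image.mp hp1
    obtain ⟨C2, _, hpe2⟩ := Finset.mem_image.mp hp2
    apply hne
    have h1 : p.1 = B1 := by rw [← hpe1]
    have h2 : p.1 = B2 := by rw [← hpe2]
    rw [← h1, ← h2]
  have hcardT : ∑ B ∈ BIG, (((cN B \ B).powersetCard t).filter
      (fun B2 => ∀ x ∈ B2, ∀ y ∈ B2, ¬ G.Adj x y)).card ≤ T0.card := by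
    have hbi := Finset.card_biUnion hdisjT
    have himg : ∀ B ∈ BIG, ((((cN B \ B).powersetCard t).filter
        (fun B2 => ∀ x ∈ B2, ∀ y ∈ B2, ¬ G.Adj x y)).image (fun C => (B, C))).card
        = (((cN B \ B).powersetCard t).filter
            (fun B2 => ∀ x ∈ B2, ∀ y ∈ B2, ¬ G.Adj x y)).card := by
      intro B _
      apply Finset.card_image_of_injective
      intro a b hab
      exact (Prod.mk.injEq _ _ _ _).mp hab |>.2
    calc ∑ B ∈ BIG, (((cN B \ B).powersetCard t).filter
          (fun B2 => ∀ x ∈ B2, ∀ y ∈ B2, ¬ G.Adj x y)).card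
        = ∑ B ∈ BIG, ((((cN B \ B).powersetCard t).filter
            (fun B2 => ∀ x ∈ B2, ∀ y ∈ B2, ¬ G.Adj x y)).image (fun C => (B, C))).card :=
          (Finset.sum_congr rfl himg).symm
      _ = (BIG.biUnion (fun B => (((cN B \ B).powersetCard t).filter
            (fun B2 => ∀ x ∈ B2, ∀ y ∈ B2, ¬ G.Adj x y)).image (fun C => (B, C)))).card :=
          hbi.symm
      _ ≤ T0.card := Finset.card_le_card hsubT
  have hsum2 : (BIG.card:ℝ) * ((1/A) * (n:ℝ)^(β*t - δ*(t*t))) ≤ (T0.card:ℝ) := by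
    have h1 : ∑ B ∈ BIG, ((1/A) * (n:ℝ)^(β*t - δ*(t*t)))
        ≤ ∑ B ∈ BIG, ((((cN B \ B).powersetCard t).filter
            (fun B2 => ∀ x ∈ B2, ∀ y ∈ B2, ¬ G.Adj x y)).card : ℝ) :=
      Finset.sum_le_sum hJB
    rw [Finset.sum_const, nsmul_eq_mul] at h1
    have h2 : (∑ B ∈ BIG, ((((cN B \ B).powersetCard t).filter
        (fun B2 => ∀ x ∈ B2, ∀ y ∈ B2, ¬ G.Adj x y)).card : ℝ)) ≤ (T0.card:ℝ) := by
      exact_mod_cast hcardT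
    linarith
  set Efin : ℝ := e1 - 1 + (β*t - δ*(t*t)) with hEfindef
  have hT1 : (1/(4*A^2)) * (n:ℝ)^Efin ≤ (T0.card:ℝ) := by
    have hJpos : (0:ℝ) < (1/A) * (n:ℝ)^(β*t - δ*(t*t)) := by
      apply mul_pos (by positivity) (Real.rpow_pos_of_pos hn0R _)
    have h1 : (1/(4*A)) * (n:ℝ)^(e1-1) * ((1/A) * (n:ℝ)^(β*t - δ*(t*t)))
        ≤ (BIG.card:ℝ) * ((1/A) * (n:ℝ)^(β*t - δ*(t*t))) :=
      mul_le_mul_of_nonneg_right hBIGcard hJpos.le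
    have h2 : (1/(4*A)) * (n:ℝ)^(e1-1) * ((1/A) * (n:ℝ)^(β*t - δ*(t*t)))
        = (1/(4*A^2)) * ((n:ℝ)^(e1-1) * (n:ℝ)^(β*t - δ*(t*t))) := by
      field_simp
    have h3 : (n:ℝ)^(e1-1) * (n:ℝ)^(β*t - δ*(t*t)) = (n:ℝ)^Efin := by
      rw [← Real.rpow_add hn0R, hEfindef]
    rw [h2, h3] at h1
    linarith [hsum2]
  have hEfin2 : Efin = 2*(t:ℝ) - δ*(Q*(1+t)+(t:ℝ)^2) - η*t := by
    rw [hEfindef, he1def, hβdef, hQdef]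
    push_cast
    ring
  have hEfin3 : 2*(t:ℝ) - γ/2 ≤ Efin := by
    rw [hEfin2, hηt]
    linarith [hδQ]
  have hfinal : (n:ℝ)^(2*(t:ℝ)-γ) ≤ (1/(4*A^2)) * (n:ℝ)^Efin := by
    have h1 : (n:ℝ)^(2*(t:ℝ)-γ) * (n:ℝ)^(γ/2) = (n:ℝ)^(2*(t:ℝ)-γ/2) := by
      rw [← Real.rpow_add hn0R]
      congr 1
      ring
    have h2 : (n:ℝ)^(2*(t:ℝ)-γ/2) ≤ (n:ℝ)^Efin :=
      Real.rpow_le_rpow_of_exponent_le hn1R hEfin3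
    have h3 : (n:ℝ)^(2*(t:ℝ)-γ) * (4*A^2) ≤ (n:ℝ)^Efin := by
      calc (n:ℝ)^(2*(t:ℝ)-γ) * (4*A^2)
          ≤ (n:ℝ)^(2*(t:ℝ)-γ) * (n:ℝ)^(γ/2) :=
            mul_le_mul_of_nonneg_left E6 (Real.rpow_pos_of_pos hn0R _).le
        _ = (n:ℝ)^(2*(t:ℝ)-γ/2) := h1
        _ ≤ (n:ℝ)^Efin := h2
    have h4 : (1/(4*A^2)) * (n:ℝ)^Efin = (n:ℝ)^Efin/(4*A^2) := by ring
    rw [h4, le_div_iff₀ (by positivity)]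
    linarith
  exact le_trans hfinal hT1


end Stmt14Proof

theorem stmt14 (t : ℕ) (ht : 1 ≤ t) (γ : ℝ) (hγ : 0 < γ) :
    ∃ δ : ℝ, 0 < δ ∧
      ∃ n₀ : ℕ, ∀ n : ℕ, n₀ ≤ n →
        ∀ (G : SimpleGraph (Fin n)) [DecidableRel G.Adj],
          (n : ℝ) ^ ((1 : ℝ) - δ) ≤ (∑ v : Fin n, (G.degree v : ℝ)) / (n : ℝ) →
          (¬ ∃ S : Finset (Fin n), (n : ℝ) ^ δ ≤ (S.card : ℝ) ∧
            ∀ x ∈ S, ∀ y ∈ S, x ≠ y → G.Adj x y) →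
          (n : ℝ) ^ (2 * (t : ℝ) - γ) ≤
            ((((Finset.powersetCard t (Finset.univ : Finset (Fin n))) ×ˢ
               (Finset.powersetCard t (Finset.univ : Finset (Fin n)))).filter
              (fun p => Disjoint p.1 p.2 ∧
                (∀ x ∈ p.1, ∀ y ∈ p.1, ¬ G.Adj x y) ∧
                (∀ x ∈ p.2, ∀ y ∈ p.2, ¬ G.Adj x y) ∧
                (∀ x ∈ p.1, ∀ y ∈ p.2, G.Adj x y))).card : ℝ) := by
  obtain ⟨δ, hδ0, n₀, h⟩ := Stmt14Proof.main_aux t ht (min γ 1)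
    (lt_min hγ one_pos) (min_le_right _ _)
  refine ⟨δ, hδ0, max n₀ 1, ?_⟩
  intro n hn G instG hdeg hncl
  have hn1 : 1 ≤ n := le_trans (le_max_right _ _) hn
  have h2 := h n (le_trans (le_max_left _ _) hn) G hdeg hncl
  refine le_trans ?_ h2
  apply Real.rpow_le_rpow_of_exponent_le
  · exact_mod_cast hn1
  · linarith [min_le_left γ 1]
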